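/- Let J ∈ (0,4] and φ := arccos(J/4). If v : ℤ → ℝ³ satisfies ‖v^i‖ = 1 for all i and J·v^{i+1} = 2(v^i + v^{i+2}) for every i ∈ ℤ, then there exists a rotation R ∈ SO(3) (a real 3×3 matrix with RᵀR = I and det R = 1) such that v^i = R·(cos(φ·i), sin(φ·i), 0) for every i ∈ ℤ. That is, every ground state of the frustrated chain is a fixed rotation of the canonical helix with angle φ. -/

import Mathlib

open MeasureTheory Filter
open scoped RealInnerProductSpace

/-- The cross product on Euclidean `ℝ³`. -/
noncomputable def cross3 (a b : EuclideanSpace ℝ (Fin 3)) : EuclideanSpace ℝ (Fin 3) :=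
  (WithLp.equiv 2 (Fin 3 → ℝ)).symm
    (crossProduct ((WithLp.equiv 2 (Fin 3 → ℝ)) a) ((WithLp.equiv 2 (Fin 3 → ℝ)) b))

lemma main_lemma (a b : EuclideanSpace ℝ (Fin 3))
    (ha : ⟪a, a⟫ = 1) (hb : ⟪b, b⟫ = 1) (hab : ⟪a, b⟫ = 0) :
    ∃ R : Matrix (Fin 3) (Fin 3) ℝ, R.transpose * R = 1 ∧ R.det = 1 ∧
      ∀ x y : ℝ, (WithLp.equiv 2 (Fin 3 → ℝ)).symm (R.mulVec ![x, y, 0]) = x • a + y • b := by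
  set C : Fin 3 → ℝ := ![a 1 * b 2 - a 2 * b 1, a 2 * b 0 - a 0 * b 2, a 0 * b 1 - a 1 * b 0] with hC
  have ha' : a 0 * a 0 + a 1 * a 1 + a 2 * a 2 = 1 := by
    have h := ha
    simp only [PiLp.inner_apply, Fin.sum_univ_three, RCLike.inner_apply, conj_trivial] at h
    linear_combination h
  have hb' : b 0 * b 0 + b 1 * b 1 + b 2 * b 2 = 1 := by
    have h := hb
    simp only [PiLp.inner_apply, Fin.sum_univ_three, RCLike.inner_apply, conj_trivial] at h
    linear_combination h
  have hab' : a 0 * b 0 + a 1 * b 1 + a 2 * b 2 = 0 := by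
    have h := hab
    simp only [PiLp.inner_apply, Fin.sum_univ_three, RCLike.inner_apply, conj_trivial] at h
    linear_combination h
  refine ⟨Matrix.of ![![a 0, b 0, C 0], ![a 1, b 1, C 1], ![a 2, b 2, C 2]], ?_, ?_, ?_⟩
  · ext i j
    fin_cases i <;> fin_cases j <;>
      simp [Matrix.mul_apply, Fin.sum_univ_three, Matrix.one_apply, Matrix.transpose_apply,
        Matrix.vecHead, Matrix.vecTail, hC] <;>
      first
        | ring1
        | linear_combination ha'
        | linear_combination hb'
        | linear_combination hab'
        | linear_combination (b 0 * b 0 + b 1 * b 1 + b 2 * b 2) * ha' + hb'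
            - (a 0 * b 0 + a 1 * b 1 + a 2 * b 2) * hab'
        | linear_combination (a 0 * a 0 + a 1 * a 1 + a 2 * a 2) * hb' + ha'
            - (a 0 * b 0 + a 1 * b 1 + a 2 * b 2) * hab'
  · rw [Matrix.det_fin_three]
    simp [hC, Matrix.vecHead, Matrix.vecTail]
    linear_combination (b 0 * b 0 + b 1 * b 1 + b 2 * b 2) * ha' + hb'
      - (a 0 * b 0 + a 1 * b 1 + a 2 * b 2) * hab'
  · intro x y
    ext i
    fin_cases i <;>
      simp [Matrix.mulVec, dotProduct, Fin.sum_univ_three, hC] <;> ring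

lemma exists_orth (a : EuclideanSpace ℝ (Fin 3)) (ha : ⟪a, a⟫ = 1) :
    ∃ b : EuclideanSpace ℝ (Fin 3), ⟪b, b⟫ = 1 ∧ ⟪a, b⟫ = 0 := by
  by_cases h : a 1 = 0 ∧ a 2 = 0
  · refine ⟨(WithLp.equiv 2 (Fin 3 → ℝ)).symm ![0, 1, 0], ?_, ?_⟩ <;>
      simp only [PiLp.inner_apply, Fin.sum_univ_three, RCLike.inner_apply, conj_trivial,
        WithLp.equiv_symm_apply, PiLp.toLp_apply, Matrix.cons_val_zero, Matrix.cons_val_one,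
        Matrix.cons_val_two, h.1, h.2] <;> norm_num
  · have ht : 0 < a 1 ^ 2 + a 2 ^ 2 := by
      rcases not_and_or.mp h with h1 | h2
      · have : 0 < a 1 ^ 2 := by positivity
        nlinarith [sq_nonneg (a 2)]
      · have : 0 < a 2 ^ 2 := by positivity
        nlinarith [sq_nonneg (a 1)]
    set t := a 1 ^ 2 + a 2 ^ 2 with hts
    have hst : Real.sqrt t > 0 := Real.sqrt_pos.mpr ht
    have hsq : Real.sqrt t * Real.sqrt t = t := Real.mul_self_sqrt ht.le
    refine ⟨(WithLp.equiv 2 (Fin 3 → ℝ)).symm ![0, a 2 / Real.sqrt t, -(a 1) / Real.sqrt t], ?_, ?_⟩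
    · simp only [PiLp.inner_apply, Fin.sum_univ_three, RCLike.inner_apply, conj_trivial,
        WithLp.equiv_symm_apply, PiLp.toLp_apply, Matrix.cons_val_zero, Matrix.cons_val_one, Matrix.head_cons,
        Matrix.cons_val_two, Matrix.tail_cons]
      field_simp
      linear_combination hts.symm - hsq
    · simp only [PiLp.inner_apply, Fin.sum_univ_three, RCLike.inner_apply, conj_trivial,
        WithLp.equiv_symm_apply, PiLp.toLp_apply, Matrix.cons_val_zero, Matrix.cons_val_one, Matrix.head_cons,
        Matrix.cons_val_two, Matrix.tail_cons]
      field_simp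
      ring

/-- every ground state of the frustrated chain (unit-vector solution of
`J v^{i+1} = 2(v^i + v^{i+2})`) is a fixed rotation `R ∈ SO(3)` of the canonical helix
with angle `φ = arccos(J/4)`. -/
theorem stmt17 (J : ℝ) (hJ : J ∈ Set.Ioc (0 : ℝ) 4) (φ : ℝ) (hφ : φ = Real.arccos (J / 4))
    (v : ℤ → EuclideanSpace ℝ (Fin 3)) (hv : ∀ i : ℤ, ‖v i‖ = 1)
    (hrec : ∀ i : ℤ, J • v (i + 1) = (2 : ℝ) • (v i + v (i + 2))) :
    ∃ R : Matrix (Fin 3) (Fin 3) ℝ, R.transpose * R = 1 ∧ R.det = 1 ∧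
      ∀ i : ℤ, v i = (WithLp.equiv 2 (Fin 3 → ℝ)).symm
        (R.mulVec ![Real.cos (φ * (i : ℝ)), Real.sin (φ * (i : ℝ)), 0]) := by
  obtain ⟨hJ0, hJ4⟩ := hJ
  have hc : Real.cos φ = J / 4 := by
    rw [hφ]; exact Real.cos_arccos (by linarith) (by linarith)
  have hrec' : ∀ i : ℤ, v (i + 2) = (2 * Real.cos φ) • v (i + 1) - v i := by
    intro i
    rw [hc]
    linear_combination (norm := module) (-(2 : ℝ)⁻¹) • (hrec i)
  have hni : ∀ i : ℤ, ⟪v i, v i⟫ = 1 := by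
    intro i; rw [real_inner_self_eq_norm_mul_norm, hv i, one_mul]
  have hip : ∀ i : ℤ, ⟪v i, v (i + 1)⟫ = J / 4 := by
    intro i
    have h1 : ⟪v (i + 2), v (i + 2)⟫ = 1 := hni _
    rw [hrec' i] at h1
    simp only [inner_sub_left, inner_sub_right, real_inner_smul_left, real_inner_smul_right] at h1
    rw [hni, hni] at h1
    rw [hc] at h1
    rw [real_inner_comm (v (i + 1)) (v i)] at h1
    have hz : (J / 4) * (J / 4 - ⟪v (i + 1), v i⟫) = 0 := by
      linear_combination h1 / 4
    have hx : ⟪v (i + 1), v i⟫ = J / 4 := by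
      rcases mul_eq_zero.mp hz with h | h
      · exfalso; linarith
      · linarith
    first
      | exact (real_inner_comm (v i) (v (i + 1))).trans hx
      | exact (real_inner_comm (v (i + 1)) (v i)).trans hx
  suffices hkey : ∃ a b : EuclideanSpace ℝ (Fin 3), ⟪a, a⟫ = 1 ∧ ⟪b, b⟫ = 1 ∧ ⟪a, b⟫ = 0 ∧
      ∀ n : ℤ, v n = Real.cos (φ * (n : ℝ)) • a + Real.sin (φ * (n : ℝ)) • b by
    obtain ⟨a, b, ha, hb, hab, hk⟩ := hkey
    obtain ⟨R, h1, h2, h3⟩ := main_lemma a b ha hb hab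
    exact ⟨R, h1, h2, fun i => by rw [hk i, h3]⟩
  by_cases hJeq : J = 4
  · -- constant case
    have hφ0 : φ = 0 := by rw [hφ, hJeq]; norm_num [Real.arccos_one]
    have hstep : ∀ i : ℤ, v (i + 1) = v i := by
      intro i
      have hi1 : ⟪v i, v (i + 1)⟫ = 1 := by rw [hip i, hJeq]; norm_num
      have h0 : ⟪v (i + 1) - v i, v (i + 1) - v i⟫ = 0 := by
        simp only [inner_sub_left, inner_sub_right]
        rw [hni, hni, real_inner_comm (v i) (v (i + 1)), hi1]
        ring
      have := inner_self_eq_zero.mp h0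
      exact sub_eq_zero.mp this
    have hconst : ∀ n : ℤ, v n = v 0 := by
      intro n
      induction n using Int.induction_on with
      | zero => rfl
      | succ k ih => rw [hstep k, ih]
      | pred k ih => rw [← ih, ← hstep (-(k : ℤ) - 1)]; ring_nf
    obtain ⟨b, hb, hab⟩ := exists_orth (v 0) (hni 0)
    refine ⟨v 0, b, hni 0, hb, hab, fun n => ?_⟩
    rw [hφ0, hconst n]
    simp
  · -- genuine helix case
    have hJlt : J < 4 := lt_of_le_of_ne hJ4 hJeq
    have hs : Real.sin φ = Real.sqrt (1 - (J / 4) ^ 2) := by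
      rw [hφ, Real.sin_arccos]
    have h1c : 0 < 1 - (J / 4) ^ 2 := by nlinarith
    have hspos : 0 < Real.sin φ := by rw [hs]; exact Real.sqrt_pos.mpr h1c
    have hs2 : Real.sin φ ^ 2 = 1 - (J / 4) ^ 2 := by
      rw [hs]; exact Real.sq_sqrt h1c.le
    set s := Real.sin φ with hsdef
    set a := v 0 with hadef
    set b := s⁻¹ • (v 1 - (J / 4) • v 0) with hbdef
    have hab : ⟪a, b⟫ = 0 := by
      have h01 := hip 0
      rw [show (0 : ℤ) + 1 = (1 : ℤ) by norm_num] at h01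
      rw [hbdef, real_inner_smul_right, inner_sub_right, real_inner_smul_right, hni 0]
      rw [hadef, h01]
      ring
    have hbb : ⟪b, b⟫ = 1 := by
      rw [hbdef]
      simp only [real_inner_smul_left, real_inner_smul_right, inner_sub_left, inner_sub_right]
      have h01 := hip 0
      rw [show (0 : ℤ) + 1 = (1 : ℤ) by norm_num] at h01
      rw [hni 0, hni 1, real_inner_comm (v 0) (v 1), h01]
      field_simp
      nlinarith [hs2]
    refine ⟨a, b, hni 0, hbb, hab, ?_⟩
    have hb1 : v 1 = Real.cos φ • a + s • b := by
      rw [hbdef, smul_smul, mul_inv_cancel₀ hspos.ne', one_smul, hc, hadef]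
      module
    -- trig recurrences
    have hcos : ∀ x : ℝ, Real.cos (x + 2 * φ) = 2 * Real.cos φ * Real.cos (x + φ) - Real.cos x := by
      intro x
      have h1 := Real.cos_add (x + φ) φ
      have h2 := Real.cos_sub (x + φ) φ
      rw [show (x + φ) + φ = x + 2 * φ by ring] at h1
      rw [show (x + φ) - φ = x by ring] at h2
      linarith
    have hsin : ∀ x : ℝ, Real.sin (x + 2 * φ) = 2 * Real.cos φ * Real.sin (x + φ) - Real.sin x := by
      intro x
      have h1 := Real.sin_add (x + φ) φ
      have h2 := Real.sin_sub (x + φ) φ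
      rw [show (x + φ) + φ = x + 2 * φ by ring] at h1
      rw [show (x + φ) - φ = x by ring] at h2
      linarith
    set f : ℤ → EuclideanSpace ℝ (Fin 3) :=
      fun n => Real.cos (φ * (n : ℝ)) • a + Real.sin (φ * (n : ℝ)) • b with hf
    have hfrec : ∀ n : ℤ, f (n + 2) = (2 * Real.cos φ) • f (n + 1) - f n := by
      intro n
      have hC : Real.cos (φ * ((n : ℝ) + 2)) =
          2 * Real.cos φ * Real.cos (φ * ((n : ℝ) + 1)) - Real.cos (φ * (n : ℝ)) := by
        have := hcos (φ * (n : ℝ))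
        have e1 : φ * ((n : ℝ) + 2) = φ * (n : ℝ) + 2 * φ := by ring
        have e2 : φ * ((n : ℝ) + 1) = φ * (n : ℝ) + φ := by ring
        rw [e1, e2, this]
      have hS : Real.sin (φ * ((n : ℝ) + 2)) =
          2 * Real.cos φ * Real.sin (φ * ((n : ℝ) + 1)) - Real.sin (φ * (n : ℝ)) := by
        have := hsin (φ * (n : ℝ))
        have e1 : φ * ((n : ℝ) + 2) = φ * (n : ℝ) + 2 * φ := by ring
        have e2 : φ * ((n : ℝ) + 1) = φ * (n : ℝ) + φ := by ring
        rw [e1, e2, this]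
      simp only [hf]
      push_cast
      rw [hC, hS]
      module
    have hbase0 : v 0 = f 0 := by
      simp only [hf]
      norm_num
      exact hadef.symm
    have hbase1 : v 1 = f 1 := by
      simp only [hf]
      norm_num
      exact hb1
    have main : ∀ n : ℤ, v n = f n ∧ v (n + 1) = f (n + 1) := by
      intro n
      induction n using Int.induction_on with
      | zero => exact ⟨hbase0, hbase1⟩
      | succ k ih =>
        refine ⟨ih.2, ?_⟩
        have h1 := hrec' k
        have h2 := hfrec k
        rw [show ((k : ℤ) + 1) + 1 = (k : ℤ) + 2 by ring]
        linear_combination (norm := module) h1 - h2 + (2 * Real.cos φ) • ih.2 - ih.1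
      | pred k ih =>
        refine ⟨?_, ?_⟩
        · have h1 := hrec' (-(k : ℤ) - 1)
          have h2 := hfrec (-(k : ℤ) - 1)
          rw [show -(k : ℤ) - 1 + 2 = -(k : ℤ) + 1 by ring,
            show -(k : ℤ) - 1 + 1 = -(k : ℤ) by ring] at h1 h2
          linear_combination (norm := module) h1 - h2 - ih.2 + (2 * Real.cos φ) • ih.1
        · rw [show -(k : ℤ) - 1 + 1 = -(k : ℤ) by ring]
          exact ih.1
    exact fun n => (main n).1
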